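/- Let T1, T2, T3, T4 be the binary trees on Fin 6 with nontrivial split sets Σ(T1) = {{1,2}, {1,2,3}, {1,2,3,4}}, Σ(T2) = {{1,3}, {1,2,3}, {1,2,3,5}}, Σ(T3) = {{1,3}, {1,2,3}, {1,2,3,4}}, Σ(T4) = {{1,2}, {1,2,3}, {1,2,3,5}}, and consider the Kimura 2-parameter Fourier parameterization. Define the linear form f(q) = q_{(G,G,G,G,G,G)} + q_{(G,T,T,T,T,G)} − q_{(G,T,G,G,T,G)} − q_{(G,G,T,T,G,G)} on ℂ^{G^6}, where G=(1,0) and T=(1,1). Then: (i) for all K2P parameters s1 on T1, s2 on T2, and all π ∈ ℂ, f(π·ψ_{T1}(s1) + (1−π)·ψ_{T2}(s2)) = 0; and (ii) for each i ∈ {3, 4} there exist K2P parameters s (which may be taken with c_e = t_e for every split e, i.e. Jukes–Cantor parameters) such that f(ψ_{Ti}(s)) ≠ 0. -/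

import Mathlib

open scoped BigOperators

/-- The group `G = ℤ/2 × ℤ/2` used for 4-state group-based models. -/
abbrev Gp : Type := (ZMod 2) × (ZMod 2)

/-- A split (subset of the taxa `Fin n`) is nontrivial if `2 ≤ |A| ≤ n - 2`. -/
def Split.Nontriv {n : ℕ} (A : Finset (Fin n)) : Prop :=
  2 ≤ A.card ∧ A.card ≤ n - 2

/-- Two splits are compatible if one of the four mutual intersections is empty. -/
def Split.Compat {n : ℕ} (A B : Finset (Fin n)) : Prop :=
  A ∩ B = ∅ ∨ A ∩ Bᶜ = ∅ ∨ Aᶜ ∩ B = ∅ ∨ Aᶜ ∩ Bᶜ = ∅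

instance {n : ℕ} (A : Finset (Fin n)) : Decidable (Split.Nontriv A) := by
  unfold Split.Nontriv; infer_instance

instance {n : ℕ} (A B : Finset (Fin n)) : Decidable (Split.Compat A B) := by
  unfold Split.Compat; infer_instance

/-- A binary tree on the taxa `Fin n`, encoded by its set `Σ(T)` of `n - 3` pairwise
compatible nontrivial splits, no two of which are equal or complementary. -/
structure SplitBinaryTree (n : ℕ) where
  splits : Finset (Finset (Fin n))
  card_splits : splits.card = n - 3
  nontriv : ∀ A ∈ splits, Split.Nontriv A
  compat : ∀ A ∈ splits, ∀ B ∈ splits, Split.Compat A B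
  not_compl : ∀ A ∈ splits, ∀ B ∈ splits, A ≠ B → A ≠ Bᶜ

/-- The full split set `Σ*(T)`: the nontrivial splits together with the `n` trivial splits. -/
def fullSplits {n : ℕ} (T : SplitBinaryTree n) : Finset (Finset (Fin n)) :=
  T.splits ∪ Finset.univ.image (fun i : Fin n => ({i} : Finset (Fin n)))

/-- Two split systems agree up to complementation of individual splits. -/
def sameSplits {n : ℕ} (s t : Finset (Finset (Fin n))) : Prop :=
  ∀ A : Finset (Fin n), (A ∈ s ∨ Aᶜ ∈ s) ↔ (A ∈ t ∨ Aᶜ ∈ t)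

/-- Equality of binary trees: split sets agree up to complementation of individual splits. -/
def sameTree {n : ℕ} (T1 T2 : SplitBinaryTree n) : Prop :=
  sameSplits T1.splits T2.splits

/-- The Jukes–Cantor Fourier parameterization of the tree `T`. -/
noncomputable def psiJC {n : ℕ} (T : SplitBinaryTree n) (a : ↥(fullSplits T) → ℂ) :
    (Fin n → Gp) → ℂ := fun g =>
  if (∑ i, g i) = 0 then
    ∏ e : ↥(fullSplits T), (if (∑ i ∈ (e : Finset (Fin n)), g i) = 0 then 1 else a e)
  else 0

/-- The 2-tree mixture parameterization for the Jukes–Cantor model. -/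
noncomputable def psiMixJC {n : ℕ} (T1 T2 : SplitBinaryTree n)
    (a : ↥(fullSplits T1) → ℂ) (b : ↥(fullSplits T2) → ℂ) (pi : ℂ) :
    (Fin n → Gp) → ℂ := fun g =>
  pi * psiJC T1 a g + (1 - pi) * psiJC T2 b g

/-- The factor contributed by a single split in the K2P Fourier parameterization:
`1` for group element `A = (0,0)`, `c_e` for `C = (0,1)`, `t_e` for `G = (1,0)` or `T = (1,1)`. -/
def k2pFactor (p : ℂ × ℂ) (h : Gp) : ℂ :=
  if h = ((0 : ZMod 2), (0 : ZMod 2)) then 1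
  else if h = ((0 : ZMod 2), (1 : ZMod 2)) then p.1
  else p.2

/-- The Kimura 2-parameter Fourier parameterization of the tree `T`; the parameter of
split `e` is a pair `(c_e, t_e)`. -/
noncomputable def psiK2P {n : ℕ} (T : SplitBinaryTree n) (s : ↥(fullSplits T) → ℂ × ℂ) :
    (Fin n → Gp) → ℂ := fun g =>
  if (∑ i, g i) = 0 then
    ∏ e : ↥(fullSplits T), k2pFactor (s e) (∑ i ∈ (e : Finset (Fin n)), g i)
  else 0

/-- The 2-tree mixture parameterization for the K2P model. -/
noncomputable def psiMixK2P {n : ℕ} (T1 T2 : SplitBinaryTree n)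
    (s1 : ↥(fullSplits T1) → ℂ × ℂ) (s2 : ↥(fullSplits T2) → ℂ × ℂ) (pi : ℂ) :
    (Fin n → Gp) → ℂ := fun g =>
  pi * psiK2P T1 s1 g + (1 - pi) * psiK2P T2 s2 g

/-- The group elements `G = (1,0)` and `T = (1,1)` of `ℤ/2 × ℤ/2`. -/
def gG : Gp := ((1 : ZMod 2), (0 : ZMod 2))
def gT : Gp := ((1 : ZMod 2), (1 : ZMod 2))

/-- `Σ(T1) = {12|3456, 123|456, 1234|56}` (taxa `1,…,6` identified with `0,…,5 : Fin 6`). -/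
def sexT1 : SplitBinaryTree 6 :=
  ⟨{({0,1} : Finset (Fin 6)), {0,1,2}, {0,1,2,3}}, by decide, by decide, by decide, by decide⟩
/-- `Σ(T2) = {13|2456, 123|456, 1235|46}`. -/
def sexT2 : SplitBinaryTree 6 :=
  ⟨{({0,2} : Finset (Fin 6)), {0,1,2}, {0,1,2,4}}, by decide, by decide, by decide, by decide⟩
/-- `Σ(T3) = {13|2456, 123|456, 1234|56}`. -/
def sexT3 : SplitBinaryTree 6 :=
  ⟨{({0,2} : Finset (Fin 6)), {0,1,2}, {0,1,2,3}}, by decide, by decide, by decide, by decide⟩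
/-- `Σ(T4) = {12|3456, 123|456, 1235|46}`. -/
def sexT4 : SplitBinaryTree 6 :=
  ⟨{({0,1} : Finset (Fin 6)), {0,1,2}, {0,1,2,4}}, by decide, by decide, by decide, by decide⟩

/-- The linear form `f(q) = q_{GGGGGG} + q_{GTTTTG} − q_{GTGGTG} − q_{GGTTGG}`. -/
noncomputable def linformSextet (q : (Fin 6 → Gp) → ℂ) : ℂ :=
  q ![gG, gG, gG, gG, gG, gG] + q ![gG, gT, gT, gT, gT, gG]
    - q ![gG, gT, gG, gG, gT, gG] - q ![gG, gG, gT, gT, gG, gG]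


lemma k2pFactor_congr (p : ℂ × ℂ) {h h' : Gp} (H : h = h' ∨ (h.1 = 1 ∧ h'.1 = 1)) :
    k2pFactor p h = k2pFactor p h' := by
  rcases H with rfl | ⟨h1, h2⟩
  · rfl
  · obtain ⟨a, b⟩ := h; obtain ⟨c, d⟩ := h'
    simp only at h1 h2
    subst h1; subst h2
    simp [k2pFactor, Prod.ext_iff]

lemma psiK2P_congr {n : ℕ} (T : SplitBinaryTree n) (s : ↥(fullSplits T) → ℂ × ℂ)
    (g g' : Fin n → Gp) (h0 : (∑ i, g i) = 0) (h0' : (∑ i, g' i) = 0)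
    (he : ∀ e : ↥(fullSplits T),
      (∑ i ∈ (e : Finset (Fin n)), g i) = (∑ i ∈ (e : Finset (Fin n)), g' i) ∨
      (((∑ i ∈ (e : Finset (Fin n)), g i).1 = 1) ∧
        ((∑ i ∈ (e : Finset (Fin n)), g' i).1 = 1))) :
    psiK2P T s g = psiK2P T s g' := by
  unfold psiK2P
  rw [if_pos h0, if_pos h0']
  exact Finset.prod_congr rfl (fun e _ => k2pFactor_congr _ (he e))

lemma k2pFactor_two (h : Gp) :
    k2pFactor ((2 : ℂ), (2 : ℂ)) h = 2 ^ (if h = 0 then 0 else 1 : ℕ) := by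
  unfold k2pFactor
  rcases h with ⟨a, b⟩
  fin_cases a <;> fin_cases b <;> simp [Prod.ext_iff] <;> rfl

lemma psiK2P_two {n : ℕ} (T : SplitBinaryTree n) (g : Fin n → Gp) (h0 : (∑ i, g i) = 0) :
    psiK2P T (fun _ => ((2 : ℂ), (2 : ℂ))) g =
      2 ^ (∑ e : ↥(fullSplits T),
        if (∑ i ∈ (e : Finset (Fin n)), g i) = 0 then 0 else 1) := by
  unfold psiK2P
  rw [if_pos h0, ← Finset.prod_pow_eq_pow_sum]
  exact Finset.prod_congr rfl (fun e _ => k2pFactor_two _)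

/-- the linear form `f` vanishes on the whole image of the K2P mixture
parameterization on `(T1, T2)`, but vanishes identically on neither the K2P (indeed
Jukes–Cantor) model on `T3` nor on `T4`. -/
theorem sextet_linear_invariant :
    (∀ (s1 : ↥(fullSplits sexT1) → ℂ × ℂ) (s2 : ↥(fullSplits sexT2) → ℂ × ℂ) (pi : ℂ),
      linformSextet (psiMixK2P sexT1 sexT2 s1 s2 pi) = 0) ∧
    (∃ s : ↥(fullSplits sexT3) → ℂ × ℂ,
      (∀ e, (s e).1 = (s e).2) ∧ linformSextet (psiK2P sexT3 s) ≠ 0) ∧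
    (∃ s : ↥(fullSplits sexT4) → ℂ × ℂ,
      (∀ e, (s e).1 = (s e).2) ∧ linformSextet (psiK2P sexT4 s) ≠ 0) := by
  refine ⟨?_, ?_, ?_⟩
  · intro s1 s2 pi
    have h14 : psiK2P sexT1 s1 ![gG, gG, gG, gG, gG, gG]
        = psiK2P sexT1 s1 ![gG, gG, gT, gT, gG, gG] :=
      psiK2P_congr _ _ _ _ (by decide) (by decide) (by decide)
    have h23 : psiK2P sexT1 s1 ![gG, gT, gT, gT, gT, gG]
        = psiK2P sexT1 s1 ![gG, gT, gG, gG, gT, gG] :=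
      psiK2P_congr _ _ _ _ (by decide) (by decide) (by decide)
    have h13 : psiK2P sexT2 s2 ![gG, gG, gG, gG, gG, gG]
        = psiK2P sexT2 s2 ![gG, gT, gG, gG, gT, gG] :=
      psiK2P_congr _ _ _ _ (by decide) (by decide) (by decide)
    have h24 : psiK2P sexT2 s2 ![gG, gT, gT, gT, gT, gG]
        = psiK2P sexT2 s2 ![gG, gG, gT, gT, gG, gG] :=
      psiK2P_congr _ _ _ _ (by decide) (by decide) (by decide)
    simp only [linformSextet, psiMixK2P]
    rw [h14, h23, h13, h24]
    ring
  · refine ⟨fun _ => ((2 : ℂ), 2), fun e => rfl, ?_⟩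
    simp only [linformSextet]
    rw [psiK2P_two _ _ (by decide), psiK2P_two _ _ (by decide),
      psiK2P_two _ _ (by decide), psiK2P_two _ _ (by decide)]
    have e1 : (∑ e : ↥(fullSplits sexT3),
        if (∑ i ∈ (e : Finset (Fin 6)), (![gG, gG, gG, gG, gG, gG]) i) = 0 then 0 else 1) = 7 :=
      by decide
    have e2 : (∑ e : ↥(fullSplits sexT3),
        if (∑ i ∈ (e : Finset (Fin 6)), (![gG, gT, gT, gT, gT, gG]) i) = 0 then 0 else 1) = 9 :=
      by decide
    have e3 : (∑ e : ↥(fullSplits sexT3),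
        if (∑ i ∈ (e : Finset (Fin 6)), (![gG, gT, gG, gG, gT, gG]) i) = 0 then 0 else 1) = 8 :=
      by decide
    have e4 : (∑ e : ↥(fullSplits sexT3),
        if (∑ i ∈ (e : Finset (Fin 6)), (![gG, gG, gT, gT, gG, gG]) i) = 0 then 0 else 1) = 8 :=
      by decide
    rw [e1, e2, e3, e4]
    norm_num
  · refine ⟨fun _ => ((2 : ℂ), 2), fun e => rfl, ?_⟩
    simp only [linformSextet]
    rw [psiK2P_two _ _ (by decide), psiK2P_two _ _ (by decide),
      psiK2P_two _ _ (by decide), psiK2P_two _ _ (by decide)]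
    have e1 : (∑ e : ↥(fullSplits sexT4),
        if (∑ i ∈ (e : Finset (Fin 6)), (![gG, gG, gG, gG, gG, gG]) i) = 0 then 0 else 1) = 7 :=
      by decide
    have e2 : (∑ e : ↥(fullSplits sexT4),
        if (∑ i ∈ (e : Finset (Fin 6)), (![gG, gT, gT, gT, gT, gG]) i) = 0 then 0 else 1) = 9 :=
      by decide
    have e3 : (∑ e : ↥(fullSplits sexT4),
        if (∑ i ∈ (e : Finset (Fin 6)), (![gG, gT, gG, gG, gT, gG]) i) = 0 then 0 else 1) = 8 :=
      by decide
    have e4 : (∑ e : ↥(fullSplits sexT4),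
        if (∑ i ∈ (e : Finset (Fin 6)), (![gG, gG, gT, gT, gG, gG]) i) = 0 then 0 else 1) = 8 :=
      by decide
    rw [e1, e2, e3, e4]
    norm_num
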